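/- arXiv:2104.05252 — 2 statements merged into one kernel-verified Lean document; each statement's English description precedes it below -/
import Mathlib

section
/- For the Boltzmann-tilted family q_β on a finite type, the second derivative of D_KL(q_β ‖ p) with respect to β equals Var_{q_β}(f) + β · E_{q_β}[(f − E_{q_β}[f])³]. -/
private lemma second_deriv_kl_aux (A B C E b : ℝ) (hA : A ≠ 0) :
    ((1 * (C * A - B ^ 2) + b * (E * A + C * B - 2 * B ^ 1 * C)) * A ^ 2
        - b * (C * A - B ^ 2) * (2 * A ^ 1 * B)) / (A ^ 2) ^ 2
      = C / A - (B / A) ^ 2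
        + b * ((E - 3 * (B / A) * C + 3 * (B / A) ^ 2 * B - (B / A) ^ 3 * A) / A) := by
  field_simp
  ring

theorem second_deriv_kl {X : Type*} [Fintype X] [Nonempty X]
    (p : X → ℝ) (hp0 : ∀ x, 0 < p x) (hp1 : ∑ x, p x = 1)
    (f : X → ℝ) (β : ℝ)
    (q : ℝ → X → ℝ)
    (hq : ∀ b x, q b x = p x * Real.exp (b * f x) / (∑ y, p y * Real.exp (b * f y))) :
    deriv (deriv (fun b : ℝ => ∑ x, q b x * Real.log (q b x / p x))) β
      = ((∑ x, q β x * (f x) ^ 2) - (∑ x, q β x * f x) ^ 2)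
        + β * ∑ x, q β x * (f x - ∑ y, q β y * f y) ^ 3 := by
  set Z : ℝ → ℝ := fun b => ∑ x, p x * Real.exp (b * f x) with hZ
  set S1 : ℝ → ℝ := fun b => ∑ x, p x * f x * Real.exp (b * f x) with hS1
  set S2 : ℝ → ℝ := fun b => ∑ x, p x * f x ^ 2 * Real.exp (b * f x) with hS2
  set S3 : ℝ → ℝ := fun b => ∑ x, p x * f x ^ 3 * Real.exp (b * f x) with hS3
  have hZpos : ∀ b, 0 < Z b := fun b =>
    Finset.sum_pos (fun x _ => mul_pos (hp0 x) (Real.exp_pos _)) Finset.univ_nonempty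
  have hZne : ∀ b, Z b ≠ 0 := fun b => (hZpos b).ne'
  -- derivatives of the moment sums
  have hdZ : ∀ b, HasDerivAt Z (S1 b) b := by
    intro b
    have h : HasDerivAt Z (∑ x, p x * (Real.exp (b * f x) * f x)) b := by
      rw [hZ]
      apply HasDerivAt.fun_sum
      intro x _
      simpa using (((hasDerivAt_id b).mul_const (f x)).exp).const_mul (p x)
    convert h using 1
    rw [hS1]
    exact Finset.sum_congr rfl fun x _ => by ring
  have hdS1 : ∀ b, HasDerivAt S1 (S2 b) b := by
    intro b
    have h : HasDerivAt S1 (∑ x, p x * f x * (Real.exp (b * f x) * f x)) b := by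
      rw [hS1]
      apply HasDerivAt.fun_sum
      intro x _
      simpa using (((hasDerivAt_id b).mul_const (f x)).exp).const_mul (p x * f x)
    convert h using 1
    rw [hS2]
    exact Finset.sum_congr rfl fun x _ => by ring
  have hdS2 : ∀ b, HasDerivAt S2 (S3 b) b := by
    intro b
    have h : HasDerivAt S2 (∑ x, p x * f x ^ 2 * (Real.exp (b * f x) * f x)) b := by
      rw [hS2]
      apply HasDerivAt.fun_sum
      intro x _
      simpa using (((hasDerivAt_id b).mul_const (f x)).exp).const_mul (p x * f x ^ 2)
    convert h using 1
    rw [hS3]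
    exact Finset.sum_congr rfl fun x _ => by ring
  -- helper: sums against q
  have hqsum : ∀ b (w : X → ℝ),
      ∑ x, q b x * w x = (∑ x, p x * w x * Real.exp (b * f x)) / Z b := by
    intro b w
    rw [Finset.sum_div]
    refine Finset.sum_congr rfl fun x _ => ?_
    rw [hq]
    simp only [hZ]
    ring
  -- the KL sum as an explicit function
  have hKL : (fun b : ℝ => ∑ x, q b x * Real.log (q b x / p x))
      = fun b => b * S1 b / Z b - Real.log (Z b) := by
    funext b
    have h1 : ∀ x, q b x * Real.log (q b x / p x)
        = q b x * (b * f x) - Real.log (Z b) * q b x := by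
      intro x
      have hqp : q b x / p x = Real.exp (b * f x) / Z b := by
        have h2 : q b x = Real.exp (b * f x) / Z b * p x := by
          rw [hq]; simp only [hZ]; ring
        rw [h2, mul_div_assoc, div_self (hp0 x).ne', mul_one]
      rw [hqp, Real.log_div (Real.exp_ne_zero _) (hZne b), Real.log_exp]
      ring
    rw [Finset.sum_congr rfl fun x _ => h1 x, Finset.sum_sub_distrib, ← Finset.mul_sum]
    have hq1 : ∑ x, q b x = 1 := by
      have := hqsum b (fun _ => 1)
      simp only [mul_one] at this
      rw [this]
      rw [div_eq_one_iff_eq (hZne b), hZ]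
    have hqf : ∑ x, q b x * (b * f x) = b * S1 b / Z b := by
      have h2 : ∑ x, q b x * (b * f x) = b * ∑ x, q b x * f x := by
        rw [Finset.mul_sum]; exact Finset.sum_congr rfl fun x _ => by ring
      rw [h2, hqsum b f]
      rw [hS1]
      ring
    rw [hqf, hq1, mul_one]
  rw [hKL]
  -- first derivative
  have hd1 : ∀ b, HasDerivAt (fun b => b * S1 b / Z b - Real.log (Z b))
      (b * (S2 b * Z b - S1 b ^ 2) / Z b ^ 2) b := by
    intro b
    have hN : HasDerivAt (fun b => b * S1 b) (1 * S1 b + b * S2 b) b :=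
      (hasDerivAt_id b).mul (hdS1 b)
    have h := (hN.div (hdZ b) (hZne b)).sub ((hdZ b).log (hZne b))
    refine h.congr_deriv ?_
    field_simp [hZne b]
    ring
  have hD1 : deriv (fun b => b * S1 b / Z b - Real.log (Z b))
      = fun b => b * (S2 b * Z b - S1 b ^ 2) / Z b ^ 2 := by
    funext b; exact (hd1 b).deriv
  rw [hD1]
  -- second derivative
  have hN2 : HasDerivAt (fun b => b * (S2 b * Z b - S1 b ^ 2))
      (1 * (S2 β * Z β - S1 β ^ 2)
        + β * ((S3 β * Z β + S2 β * S1 β) - 2 * S1 β ^ 1 * S2 β)) β :=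
    (hasDerivAt_id β).mul (((hdS2 β).mul (hdZ β)).sub ((hdS1 β).pow 2))
  have hDen : HasDerivAt (fun b => Z b ^ 2) (2 * Z β ^ 1 * S1 β) β := (hdZ β).pow 2
  have hd2 := hN2.div hDen (pow_ne_zero 2 (hZne β))
  rw [show deriv (fun b => b * (S2 b * Z b - S1 b ^ 2) / Z b ^ 2) β = _ from hd2.deriv]
  -- convert RHS sums to moment expressions
  have hf1 : ∑ x, q β x * f x = S1 β / Z β := by rw [hqsum β f, hS1]
  have hf2 : ∑ x, q β x * f x ^ 2 = S2 β / Z β := by rw [hqsum β (fun x => f x ^ 2), hS2]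
  have hcube : ∑ x, q β x * (f x - ∑ y, q β y * f y) ^ 3
      = (S3 β - 3 * (S1 β / Z β) * S2 β + 3 * (S1 β / Z β) ^ 2 * S1 β
          - (S1 β / Z β) ^ 3 * Z β) / Z β := by
    rw [hf1, hqsum β (fun x => (f x - S1 β / Z β) ^ 3)]
    congr 1
    have : ∀ x, p x * (f x - S1 β / Z β) ^ 3 * Real.exp (β * f x)
        = p x * f x ^ 3 * Real.exp (β * f x)
          - 3 * (S1 β / Z β) * (p x * f x ^ 2 * Real.exp (β * f x))
          + 3 * (S1 β / Z β) ^ 2 * (p x * f x * Real.exp (β * f x))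
          - (S1 β / Z β) ^ 3 * (p x * Real.exp (β * f x)) := fun x => by ring
    rw [Finset.sum_congr rfl fun x _ => this x]
    simp only [Finset.sum_sub_distrib, Finset.sum_add_distrib, ← Finset.mul_sum]
    rfl
  rw [hcube, hf2, hf1]
  exact second_deriv_kl_aux (Z β) (S1 β) (S2 β) (S3 β) β (hZne β)
end

section
/- The map β ↦ D_KL(q_β ‖ p) is monotone nondecreasing on [0, ∞) for the Boltzmann-tilted family q_β on a finite type. -/
theorem kl_monotoneOn_nonneg {X : Type*} [Fintype X] [Nonempty X]
    (p : X → ℝ) (hp0 : ∀ x, 0 < p x) (hp1 : ∑ x, p x = 1)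
    (f : X → ℝ)
    (q : ℝ → X → ℝ)
    (hq : ∀ b x, q b x = p x * Real.exp (b * f x) / (∑ y, p y * Real.exp (b * f y))) :
    MonotoneOn (fun b : ℝ => ∑ x, q b x * Real.log (q b x / p x)) (Set.Ici 0) := by
  set Z : ℝ → ℝ := fun b => ∑ x, p x * Real.exp (b * f x) with hZdef
  set A : ℝ → ℝ := fun b => ∑ x, p x * f x * Real.exp (b * f x) with hAdef
  set B : ℝ → ℝ := fun b => ∑ x, p x * f x ^ 2 * Real.exp (b * f x) with hBdef
  have hZpos : ∀ b, 0 < Z b := fun b =>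
    Finset.sum_pos (fun x _ => mul_pos (hp0 x) (Real.exp_pos _)) Finset.univ_nonempty
  have hZne : ∀ b, Z b ≠ 0 := fun b => (hZpos b).ne'
  have hZderiv : ∀ b, HasDerivAt Z (A b) b := by
    intro b
    apply HasDerivAt.fun_sum
    intro x _
    have h1 : HasDerivAt (fun b : ℝ => b * f x) (f x) b := hasDerivAt_mul_const _
    have h2 : HasDerivAt (fun b : ℝ => Real.exp (b * f x)) (Real.exp (b * f x) * f x) b :=
      (Real.hasDerivAt_exp _).comp b h1
    have := h2.const_mul (p x)
    exact this.congr_deriv (by ring)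
  have hAderiv : ∀ b, HasDerivAt A (B b) b := by
    intro b
    apply HasDerivAt.fun_sum
    intro x _
    have h1 : HasDerivAt (fun b : ℝ => b * f x) (f x) b := hasDerivAt_mul_const _
    have h2 : HasDerivAt (fun b : ℝ => Real.exp (b * f x)) (Real.exp (b * f x) * f x) b :=
      (Real.hasDerivAt_exp _).comp b h1
    have := h2.const_mul (p x * f x)
    exact this.congr_deriv (by ring)
  -- Cauchy-Schwarz: A b ^ 2 ≤ B b * Z b
  have hCS : ∀ b, A b ^ 2 ≤ B b * Z b := by
    intro b
    have key := Finset.sum_mul_sq_le_sq_mul_sq Finset.univ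
      (fun x => Real.sqrt (p x * Real.exp (b * f x)) * f x)
      (fun x => Real.sqrt (p x * Real.exp (b * f x)))
    have hsq : ∀ x : X, Real.sqrt (p x * Real.exp (b * f x)) ^ 2
        = p x * Real.exp (b * f x) := fun x =>
      Real.sq_sqrt (le_of_lt (mul_pos (hp0 x) (Real.exp_pos _)))
    calc A b ^ 2
        = (∑ x, (Real.sqrt (p x * Real.exp (b * f x)) * f x)
            * Real.sqrt (p x * Real.exp (b * f x))) ^ 2 := by
          congr 1
          apply Finset.sum_congr rfl
          intro x _
          rw [show Real.sqrt (p x * Real.exp (b * f x)) * f x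
              * Real.sqrt (p x * Real.exp (b * f x))
              = Real.sqrt (p x * Real.exp (b * f x))
                * Real.sqrt (p x * Real.exp (b * f x)) * f x from by ring,
            ← sq, hsq]
          ring
      _ ≤ (∑ x, (Real.sqrt (p x * Real.exp (b * f x)) * f x) ^ 2)
            * ∑ x, Real.sqrt (p x * Real.exp (b * f x)) ^ 2 := key
      _ = B b * Z b := by
          congr 1
          · apply Finset.sum_congr rfl
            intro x _
            rw [mul_pow, hsq]; ring
          · exact Finset.sum_congr rfl fun x _ => hsq x
  -- rewrite the function
  have hfun : ∀ b, (∑ x, q b x * Real.log (q b x / p x)) = b * A b / Z b - Real.log (Z b) := by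
    intro b
    have hqsum : ∑ x, q b x = 1 := by
      simp only [hq]
      rw [← Finset.sum_div, div_self (hZne b)]
    have hterm : ∀ x, q b x * Real.log (q b x / p x)
        = b * (q b x * f x) - Real.log (Z b) * q b x := by
      intro x
      have hqp : q b x / p x = Real.exp (b * f x) / Z b := by
        rw [hq, div_div, mul_comm _ (p x), ← div_div,
          mul_div_cancel_left₀ _ (hp0 x).ne']
      rw [hqp, Real.log_div (Real.exp_ne_zero _) (hZne b), Real.log_exp]
      ring
    rw [Finset.sum_congr rfl (fun x _ => hterm x), Finset.sum_sub_distrib,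
      ← Finset.mul_sum, ← Finset.mul_sum, hqsum, mul_one]
    have hqf : ∑ x, q b x * f x = A b / Z b := by
      simp only [hq, div_mul_eq_mul_div]
      rw [← Finset.sum_div]
      congr 1
      apply Finset.sum_congr rfl
      intro x _
      ring
    rw [hqf]
    ring_nf
  have heq : (fun b : ℝ => ∑ x, q b x * Real.log (q b x / p x))
      = fun b => b * A b / Z b - Real.log (Z b) := funext hfun
  rw [heq]
  have hg : ∀ b, HasDerivAt (fun b => b * A b / Z b - Real.log (Z b))
      (((A b + b * B b) * Z b - b * A b * A b) / (Z b) ^ 2 - A b / Z b) b := by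
    intro b
    have h1 : HasDerivAt (fun b : ℝ => b * A b) (1 * A b + b * B b) b :=
      (hasDerivAt_id b).mul (hAderiv b)
    have h2 := (h1.div (hZderiv b) (hZne b)).sub ((hZderiv b).log (hZne b))
    exact h2.congr_deriv (by ring)
  apply monotoneOn_of_deriv_nonneg (convex_Ici 0)
  · exact fun b _ => ((hg b).differentiableAt.continuousAt).continuousWithinAt
  · intro b _
    exact (hg b).differentiableAt.differentiableWithinAt
  · intro b hb
    rw [interior_Ici] at hb
    rw [(hg b).deriv]
    have key : ((A b + b * B b) * Z b - b * A b * A b) / (Z b) ^ 2 - A b / Z b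
        = b * (B b * Z b - A b ^ 2) / (Z b) ^ 2 := by
      have hz := hZne b
      field_simp
      ring
    rw [key]
    apply div_nonneg _ (sq_nonneg _)
    exact mul_nonneg hb.le (sub_nonneg.mpr (hCS b))
end
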